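/- Let λ > 0 and 0 ≤ ε ≤ λ/2, let T ∈ ℝ, and let f₊, f₋ : [T, ∞) → ℝ be nonnegative, bounded, continuously differentiable functions satisfying f₊'(t) ≤ −λ·f₊(t) + ε·f₋(t) and f₋'(t) ≥ λ·f₋(t) − ε·f₊(t) for all t ≥ T. Then for all t ≥ T one has f₋(t) ≤ (2ε/λ)·f₊(t) and f₊(t) ≤ f₊(T)·e^{−λ(t−T)/2}. -/

import Mathlib

open Set

lemma mono_aux (T k : ℝ) (u du : ℝ → ℝ)
    (hd : ∀ t ∈ Ici T, HasDerivAt u (du t) t)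
    (h : ∀ t ∈ Ici T, k * u t ≤ du t) :
    MonotoneOn (fun t => u t * Real.exp (-k * (t - T))) (Ici T) := by
  have hder : ∀ t ∈ Ici T, HasDerivAt (fun t => u t * Real.exp (-k * (t - T)))
      ((du t - k * u t) * Real.exp (-k * (t - T))) t := by
    intro t ht
    have hlin : HasDerivAt (fun t : ℝ => -k * (t - T)) (-k) t := by
      simpa using ((hasDerivAt_id t).sub_const T).const_mul (-k)
    have he := hlin.exp
    have := (hd t ht).fun_mul he
    exact this.congr_deriv (by ring)
  apply monotoneOn_of_deriv_nonneg (convex_Ici T)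
  · exact fun t ht => (hder t ht).continuousAt.continuousWithinAt
  · intro t ht
    rw [interior_Ici] at ht
    exact (hder t (mem_Ici.2 (le_of_lt ht))).differentiableAt.differentiableWithinAt
  · intro t ht
    rw [interior_Ici] at ht
    rw [(hder t (mem_Ici.2 (le_of_lt ht))).deriv]
    have := h t (mem_Ici.2 (le_of_lt ht))
    exact mul_nonneg (by linarith) (Real.exp_pos _).le

/-- Coupled differential-inequality lemma ((IV.5.2)–(IV.5.4)): if `f₊, f₋ ≥ 0` are bounded
and `C¹` on `[T, ∞)` with `f₊' ≤ −λ f₊ + ε f₋` and `f₋' ≥ λ f₋ − ε f₊` where `0 ≤ ε ≤ λ/2`,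
then `f₋ ≤ (2ε/λ) f₊` and `f₊(t) ≤ f₊(T) e^{−λ(t−T)/2}` on `[T, ∞)`. -/
theorem coupled_exponential_decay (lam ε T : ℝ) (hlam : 0 < lam) (hε0 : 0 ≤ ε)
    (hε : ε ≤ lam / 2) (fp fm dp dm : ℝ → ℝ)
    (hfp0 : ∀ t ∈ Ici T, 0 ≤ fp t) (hfm0 : ∀ t ∈ Ici T, 0 ≤ fm t)
    (hbdd : ∃ M : ℝ, ∀ t ∈ Ici T, fp t ≤ M ∧ fm t ≤ M)
    (hdp : ∀ t ∈ Ici T, HasDerivAt fp (dp t) t)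
    (hdm : ∀ t ∈ Ici T, HasDerivAt fm (dm t) t)
    (hcp : ContinuousOn dp (Ici T)) (hcm : ContinuousOn dm (Ici T))
    (hip : ∀ t ∈ Ici T, dp t ≤ -lam * fp t + ε * fm t)
    (him : ∀ t ∈ Ici T, lam * fm t - ε * fp t ≤ dm t) :
    ∀ t ∈ Ici T, fm t ≤ (2 * ε / lam) * fp t ∧
      fp t ≤ fp T * Real.exp (-lam * (t - T) / 2) := by
  set c := 2 * ε / lam with hc
  set k := lam / 2 with hk
  have hk0 : 0 < k := by positivity
  have hc0 : 0 ≤ c := by positivity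
  have hlk : lam = 2 * k := by rw [hk]; ring
  have hcl : c * lam = 2 * ε := by rw [hc]; field_simp
  have hce : c * ε ≤ k := by
    rw [hc, hk, div_mul_eq_mul_div, div_le_div_iff₀ hlam (by norm_num : (0:ℝ) < 2)]
    nlinarith
  -- Step 1: fm ≤ c * fp on [T, ∞)
  have step1 : ∀ t ∈ Ici T, fm t ≤ c * fp t := by
    by_contra hcon
    push_neg at hcon
    obtain ⟨t₀, ht₀, hgt⟩ := hcon
    obtain ⟨M, hM⟩ := hbdd
    set g := fun t => fm t - c * fp t with hg
    set dg := fun t => dm t - c * dp t with hdgdef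
    have hdg : ∀ t ∈ Ici T, HasDerivAt g (dg t) t := fun t ht =>
      (hdm t ht).sub ((hdp t ht).const_mul c)
    have hkg : ∀ t ∈ Ici T, k * g t ≤ dg t := by
      intro t ht
      have h1 := hip t ht
      have h2 := him t ht
      have h3 := hfp0 t ht
      have h4 := hfm0 t ht
      have A : c * dp t ≤ c * (-lam * fp t + ε * fm t) :=
        mul_le_mul_of_nonneg_left h1 hc0
      have B : 0 ≤ (k - c * ε) * fm t := mul_nonneg (by linarith) h4
      have C : 0 ≤ k * (c * fp t) := mul_nonneg hk0.le (mul_nonneg hc0 h3)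
      simp only [hg, hdgdef]
      nlinarith [mul_nonneg hε0 h3]
    have hmono := mono_aux T k g dg hdg hkg
    set a := g t₀ * Real.exp (-k * (t₀ - T)) with ha
    have hg0 : 0 < g t₀ := sub_pos.2 hgt
    have ha0 : 0 < a := mul_pos hg0 (Real.exp_pos _)
    set t₁ := max t₀ (T + (M / a + 1) / k) with ht₁def
    have ht₁T : T ≤ t₁ := le_trans ht₀ (le_max_left _ _)
    have hH : a ≤ g t₁ * Real.exp (-k * (t₁ - T)) := hmono ht₀ ht₁T (le_max_left _ _)
    have key : a * Real.exp (k * (t₁ - T)) ≤ g t₁ := by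
      calc a * Real.exp (k * (t₁ - T))
          ≤ g t₁ * Real.exp (-k * (t₁ - T)) * Real.exp (k * (t₁ - T)) :=
            mul_le_mul_of_nonneg_right hH (Real.exp_pos (k * (t₁ - T))).le
        _ = g t₁ := by
            rw [mul_assoc, ← Real.exp_add, show -k * (t₁ - T) + k * (t₁ - T) = 0 by ring,
              Real.exp_zero, mul_one]
    have e1 : M / a + 1 ≤ k * (t₁ - T) := by
      have h6 : T + (M / a + 1) / k ≤ t₁ := le_max_right _ _
      have h7 : (M / a + 1) / k ≤ t₁ - T := by linarith
      calc M / a + 1 = ((M / a + 1) / k) * k := by field_simp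
        _ ≤ (t₁ - T) * k := mul_le_mul_of_nonneg_right h7 hk0.le
        _ = k * (t₁ - T) := mul_comm _ _
    have e2 : M / a + 2 ≤ Real.exp (k * (t₁ - T)) :=
      le_trans (by linarith) (Real.add_one_le_exp _)
    have e3 : a * (M / a + 2) ≤ g t₁ :=
      le_trans (mul_le_mul_of_nonneg_left e2 ha0.le) key
    have e4 : a * (M / a + 2) = M + 2 * a := by
      rw [mul_add, mul_comm a (M / a), div_mul_cancel₀ M (ne_of_gt ha0)]; ring
    have e5 : g t₁ ≤ M := by
      have h8 := (hM t₁ ht₁T).2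
      have h9 := mul_nonneg hc0 (hfp0 t₁ ht₁T)
      simp only [hg]; linarith
    have hfin : M + 2 * a ≤ M := by rw [← e4]; exact le_trans e3 e5
    linarith
  -- Step 2: exponential decay of fp
  have hdp2 : ∀ t ∈ Ici T, k * fp t ≤ -dp t := by
    intro t ht
    have h1 := hip t ht
    have h2 := step1 t ht
    have h3 := hfp0 t ht
    have A : ε * fm t ≤ ε * (c * fp t) := mul_le_mul_of_nonneg_left h2 hε0
    have B : c * ε * fp t ≤ k * fp t := mul_le_mul_of_nonneg_right hce h3
    nlinarith
  have hmono2 := mono_aux T (-k) (fun t => -fp t) (fun t => -dp t)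
    (fun t ht => (hdp t ht).neg)
    (fun t ht => by simpa [neg_mul_neg] using hdp2 t ht)
  intro t ht
  refine ⟨step1 t ht, ?_⟩
  have h10 := hmono2 self_mem_Ici ht ht
  simp only [sub_self, mul_zero, neg_neg, Real.exp_zero, mul_one] at h10
  -- h10 : -fp T ≤ -fp t * Real.exp (k * (t - T))
  have h11 : fp t * Real.exp (k * (t - T)) ≤ fp T := by
    have := h10
    nlinarith [Real.exp_pos (k * (t - T))]
  have h12 : fp t ≤ fp T * Real.exp (-k * (t - T)) := by
    have h13 := mul_le_mul_of_nonneg_right h11 (Real.exp_pos (-k * (t - T))).le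
    rwa [mul_assoc, ← Real.exp_add, show k * (t - T) + -k * (t - T) = 0 by ring,
      Real.exp_zero, mul_one] at h13
  have : -k * (t - T) = -lam * (t - T) / 2 := by rw [hk]; ring
  rwa [this] at h12
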